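/- Let β be a progressively measurable real-valued process with |β(t)| ≤ C for all t, let x₀ ≥ z₀ ≥ 0, let W be a Brownian motion and A a continuous increasing adapted process with A(0) = 0. Define X(t) = x₀ + ∫₀^t β(s)ds + W(t) + R_t(X) and Z(t) = z₀ − Ct + W(t) + R_t(Z) − A(t), where R_t(X) = sup_{u≤t} max{0, −(x₀ + ∫₀^u β(s)ds + W(u))} and R_t(Z) = sup_{u≤t} max{0, −(z₀ − Cu + W(u) − A(u))} are the Skorokhod reflection terms at 0. Then Z(t) ≤ X(t) for all t ≥ 0, almost surely. -/

import Mathlib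

open MeasureTheory ProbabilityTheory

/-- `W` is a standard one-dimensional Brownian motion under `P`. -/
def IsStandardBM {Ω : Type*} [MeasurableSpace Ω] (P : Measure Ω) (W : ℝ → Ω → ℝ) : Prop :=
  (∀ᵐ ω ∂P, W 0 ω = 0 ∧ Continuous fun t => W t ω) ∧
  (∀ s t : ℝ, 0 ≤ s → s ≤ t →
    Measure.map (fun ω => W t ω - W s ω) P = gaussianReal 0 (Real.toNNReal (t - s))) ∧
  (∀ (n : ℕ) (τ : Fin (n + 1) → ℝ), Monotone τ →
    iIndepFun
      (fun i : Fin n => fun ω => W (τ i.succ) ω - W (τ i.castSucc) ω) P)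

theorem reflected_comparison {Ω : Type*} [MeasurableSpace Ω] (P : Measure Ω)
    [IsProbabilityMeasure P]
    (C x₀ z₀ : ℝ) (hC : 0 ≤ C) (hx₀ : z₀ ≤ x₀) (hz₀ : 0 ≤ z₀)
    (W β A : ℝ → Ω → ℝ)
    (hW : IsStandardBM P W)
    (hβ : ∀ t ω, |β t ω| ≤ C)
    (hβint : ∀ ω u, IntervalIntegrable (fun s => β s ω) volume 0 u)
    (hA : ∀ᵐ ω ∂P, A 0 ω = 0 ∧ Continuous (fun t => A t ω) ∧
      MonotoneOn (fun t => A t ω) (Set.Ici 0))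
    (X Z RX RZ : ℝ → Ω → ℝ)
    (hRX : ∀ t ω, RX t ω = sSup ((fun u =>
      max 0 (-(x₀ + (∫ s in (0 : ℝ)..u, β s ω) + W u ω))) '' Set.Icc 0 t))
    (hRZ : ∀ t ω, RZ t ω = sSup ((fun u =>
      max 0 (-(z₀ - C * u + W u ω - A u ω))) '' Set.Icc 0 t))
    (hX : ∀ t ω, X t ω = x₀ + (∫ s in (0 : ℝ)..t, β s ω) + W t ω + RX t ω)
    (hZ : ∀ t ω, Z t ω = z₀ - C * t + W t ω + RZ t ω - A t ω) :
    ∀ᵐ ω ∂P, ∀ t : ℝ, 0 ≤ t → Z t ω ≤ X t ω := by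
  have h1 := hW.1
  filter_upwards [h1, hA] with ω hWω hAω
  intro t ht
  obtain ⟨hA0, hAcont, hAmono⟩ := hAω
  set F : ℝ → ℝ := fun u => x₀ + (∫ s in (0 : ℝ)..u, β s ω) + W u ω with hF
  set G : ℝ → ℝ := fun u => z₀ - C * u + W u ω - A u ω with hG
  have hint : ∀ a b : ℝ, IntervalIntegrable (fun s => β s ω) volume a b :=
    fun a b => (hβint ω a).symm.trans (hβint ω b)
  have hFcont : Continuous F := by
    exact (continuous_const.add (intervalIntegral.continuous_primitive hint 0)).add hWω.2
  -- key monotonicity of the integral + C*u term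
  have intbound : ∀ u v : ℝ, u ≤ v →
      (∫ s in (0 : ℝ)..u, β s ω) + C * u ≤ (∫ s in (0 : ℝ)..v, β s ω) + C * v := by
    intro u v huv
    have hadd : (∫ s in (0 : ℝ)..u, β s ω) + (∫ s in u..v, β s ω)
        = ∫ s in (0 : ℝ)..v, β s ω :=
      intervalIntegral.integral_add_adjacent_intervals (hβint ω u) (hint u v)
    have hlow : (-C) * (v - u) ≤ ∫ s in u..v, β s ω := by
      have : ∫ s in u..v, (-C : ℝ) ≤ ∫ s in u..v, β s ω := by
        apply intervalIntegral.integral_mono_on huv intervalIntegrable_const (hint u v)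
        intro s _
        exact (abs_le.mp (hβ s ω)).1
      simpa [intervalIntegral.integral_const, smul_eq_mul, mul_comm] using this
    nlinarith [hlow, hadd]
  have hFG : ∀ u : ℝ, 0 ≤ u → u ≤ t → F u - G u ≤ F t - G t := by
    intro u hu hut
    have h2 := intbound u t hut
    have h3 : A u ω ≤ A t ω := hAmono hu (le_trans hu hut) hut
    simp only [hF, hG]
    ring_nf
    nlinarith [h2, h3]
  have hFG0 : 0 ≤ F t - G t := by
    have h2 := intbound 0 t ht
    have h3 : A 0 ω ≤ A t ω := hAmono (Set.mem_Ici.mpr le_rfl) ht ht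
    simp only [hF, hG]
    simp only [intervalIntegral.integral_same] at h2
    nlinarith [h2, h3, hA0]
  have hBdd : BddAbove ((fun u => max 0 (-(x₀ + (∫ s in (0 : ℝ)..u, β s ω) + W u ω)))
      '' Set.Icc 0 t) := by
    exact (isCompact_Icc.image (continuous_const.max hFcont.neg)).bddAbove
  have hRXge : ∀ u ∈ Set.Icc (0:ℝ) t, max 0 (-F u) ≤ RX t ω := by
    intro u hu
    rw [hRX]
    exact le_csSup hBdd (Set.mem_image_of_mem _ hu)
  have hRX0 : 0 ≤ RX t ω :=
    le_trans (le_max_left _ _) (hRXge 0 (Set.left_mem_Icc.mpr ht))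
  rw [hX, hZ, hRZ]
  have key : sSup ((fun u => max 0 (-(z₀ - C * u + W u ω - A u ω))) '' Set.Icc 0 t)
      ≤ (F t + RX t ω) - G t := by
    apply Real.sSup_le
    · rintro y ⟨u, hu, rfl⟩
      apply max_le
      · linarith
      · have h1 : -F u ≤ RX t ω := le_trans (le_max_right _ _) (hRXge u hu)
        have h2 := hFG u hu.1 hu.2
        simp only [hF, hG] at h1 h2 ⊢
        linarith
    · linarith
  simp only [hF, hG] at key ⊢
  linarith
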